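/- Let d ≥ 1 be a natural number and let Ψ > 0 be a real number satisfying (d+1)(Ψ+1)^d = Ψ^{d+1}. Consider a weighted online resource allocation instance: a finite set R of resources, each resource r having cost function c_r : ℝ_{≥0} → ℝ_{≥0} that is a polynomial with nonnegative coefficients and degree at most d; a sequence of n requests, where request i has weight w_i > 0 and a nonempty set 𝒮_i of feasible allocations (subsets of R). Let S = (S_1,…,S_n) be an allocation vector produced by the best reply algorithm, i.e., for every i and every S' ∈ 𝒮_i, ∑_{r ∈ S_i} w_i·c_r(ℓ_r(i)+w_i) ≤ ∑_{r ∈ S'} w_i·c_r(ℓ_r(i)+w_i), where ℓ_r(i) = ∑_{j < i, r ∈ S_j} w_j. Then for every feasible allocation vector S*, ∑_{r ∈ R} w_r(S)·c_r(w_r(S)) ≤ Ψ^{d+1} · ∑_{r ∈ R} w_r(S*)·c_r(w_r(S*)), where w_r(T) = ∑_{i : r ∈ T_i} w_i. -/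

import Mathlib

open Finset


lemma brw_eval_nonneg (p : Polynomial ℝ) (hc : ∀ k, 0 ≤ p.coeff k) {x : ℝ} (hx : 0 ≤ x) :
    0 ≤ p.eval x := by
  rw [Polynomial.eval_eq_sum_range]
  exact Finset.sum_nonneg fun k _ => mul_nonneg (hc k) (pow_nonneg hx k)

lemma brw_eval_mono (p : Polynomial ℝ) (hc : ∀ k, 0 ≤ p.coeff k) {x y : ℝ} (hx : 0 ≤ x)
    (hxy : x ≤ y) : p.eval x ≤ p.eval y := by
  rw [Polynomial.eval_eq_sum_range, Polynomial.eval_eq_sum_range]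
  exact Finset.sum_le_sum fun k _ =>
    mul_le_mul_of_nonneg_left (pow_le_pow_left₀ hx hxy k) (hc k)

lemma brw_pow_sub (m : ℕ) (u v : ℝ) (hu : 0 ≤ u) (hv : 0 ≤ v) :
    (u + v) ^ (m + 1) - u ^ (m + 1) ≤ ((m : ℝ) + 1) * v * (u + v) ^ m := by
  have h := geom_sum₂_mul (u + v) u (m + 1)
  have hsum : (∑ i ∈ range (m + 1), (u + v) ^ i * u ^ (m + 1 - 1 - i)) ≤
      ((m : ℝ) + 1) * (u + v) ^ m := by
    calc (∑ i ∈ range (m + 1), (u + v) ^ i * u ^ (m + 1 - 1 - i))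
        ≤ ∑ i ∈ range (m + 1), (u + v) ^ m := by
          apply Finset.sum_le_sum
          intro i hi
          have hi' : i ≤ m := Nat.lt_succ_iff.mp (Finset.mem_range.mp hi)
          calc (u + v) ^ i * u ^ (m + 1 - 1 - i)
              ≤ (u + v) ^ i * (u + v) ^ (m - i) := by
                apply mul_le_mul_of_nonneg_left
                  (pow_le_pow_left₀ hu (by linarith) _) (by positivity)
            _ = (u + v) ^ m := by rw [← pow_add, Nat.add_sub_cancel' hi']
      _ = ((m : ℝ) + 1) * (u + v) ^ m := by
          rw [Finset.sum_const, card_range, nsmul_eq_mul]; push_cast; ring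
  calc (u + v) ^ (m + 1) - u ^ (m + 1)
      = (∑ i ∈ range (m + 1), (u + v) ^ i * u ^ (m + 1 - 1 - i)) * v := by
        rw [← h]; ring
    _ ≤ (((m : ℝ) + 1) * (u + v) ^ m) * v := by
        apply mul_le_mul_of_nonneg_right hsum hv
    _ = ((m : ℝ) + 1) * v * (u + v) ^ m := by ring

lemma brw_core (m j : ℕ) (hj : j ≤ m) (a b : ℝ) (ha : 0 ≤ a) (hb : 0 ≤ b) :
    (m : ℝ) * (a ^ j * b ^ (m - j)) ≤ (j : ℝ) * a ^ m + ((m : ℝ) - (j : ℝ)) * b ^ m := by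
  rcases Nat.eq_zero_or_pos m with hm | hm
  · subst hm
    interval_cases j
    simp
  · have hm' : (0 : ℝ) < m := by exact_mod_cast hm
    have hjm : (j : ℝ) ≤ (m : ℝ) := by exact_mod_cast hj
    have h1 : (a ^ m) ^ ((j : ℝ) / m) * (b ^ m) ^ (((m : ℝ) - j) / m)
        ≤ ((j : ℝ) / m) * a ^ m + (((m : ℝ) - j) / m) * b ^ m :=
      Real.geom_mean_le_arith_mean2_weighted (by positivity)
        (div_nonneg (by linarith) hm'.le) (by positivity) (by positivity)
        (by field_simp; ring)
    have e1 : (a ^ m) ^ ((j : ℝ) / m) = a ^ j := by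
      rw [← Real.rpow_natCast a m, ← Real.rpow_mul ha]
      rw [show (m : ℝ) * ((j : ℝ) / m) = (j : ℝ) by field_simp]
      exact Real.rpow_natCast a j
    have e2 : (b ^ m) ^ (((m : ℝ) - j) / m) = b ^ (m - j) := by
      rw [← Real.rpow_natCast b m, ← Real.rpow_mul hb,
        show (m : ℝ) * (((m : ℝ) - j) / m) = ((m - j : ℕ) : ℝ) by
          rw [Nat.cast_sub hj]; field_simp,
        Real.rpow_natCast]
    rw [e1, e2] at h1
    have h2 := mul_le_mul_of_nonneg_left h1 hm'.le
    calc (m : ℝ) * (a ^ j * b ^ (m - j)) ≤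
        (m : ℝ) * (((j : ℝ) / m) * a ^ m + (((m : ℝ) - j) / m) * b ^ m) := h2
      _ = (j : ℝ) * a ^ m + ((m : ℝ) - (j : ℝ)) * b ^ m := by field_simp

lemma brw_bin1 (t : ℝ) (k : ℕ) :
    ∑ j ∈ range (k + 1), (k.choose j : ℝ) * t ^ j = (t + 1) ^ k := by
  rw [add_pow]
  exact Finset.sum_congr rfl fun j _ => by ring

lemma brw_bin2 (t : ℝ) (k : ℕ) :
    ∑ j ∈ range (k + 1), (j : ℝ) * (k.choose j : ℝ) * t ^ j
      = (k : ℝ) * t * (t + 1) ^ (k - 1) := by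
  cases k with
  | zero => simp
  | succ k =>
    rw [Finset.sum_range_succ']
    have e : ∀ i, ((i + 1 : ℕ) : ℝ) * ((k + 1).choose (i + 1) : ℝ) * t ^ (i + 1)
        = ((k : ℝ) + 1) * (((k.choose i : ℝ) * t ^ i) * t) := by
      intro i
      have h := Nat.add_one_mul_choose_eq k i
      have h' : ((k : ℝ) + 1) * (k.choose i : ℝ) = ((k + 1).choose (i + 1) : ℝ) * ((i : ℝ) + 1) := by
        exact_mod_cast congrArg (Nat.cast : ℕ → ℝ) h
      push_cast
      linear_combination (-(t ^ (i + 1))) * h'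
    simp only [e, Nat.cast_zero, zero_mul, add_zero]
    rw [← Finset.mul_sum, ← Finset.sum_mul, brw_bin1]
    push_cast
    ring


set_option maxHeartbeats 1000000 in
lemma brw_smooth (d : ℕ) (Ψ : ℝ) (hΨ1 : 1 ≤ Ψ) (k : ℕ) (hk : k ≤ d)
    (x y : ℝ) (hx : 0 ≤ x) (hy : 0 ≤ y) :
    ((d : ℝ) + 1) * (y * (x + y) ^ k) ≤
      ((d : ℝ) * (Ψ + 1) ^ (d - 1) / Ψ ^ d) * x ^ (k + 1)
        + ((Ψ + 1) ^ (d - 1) * (Ψ + (d : ℝ) + 1)) * y ^ (k + 1) := by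
  have hΨ0 : (0 : ℝ) < Ψ := by linarith
  have hΨne : Ψ ≠ 0 := hΨ0.ne'
  -- per-term bound
  have hterm : ∀ j ∈ range (k + 1),
      ((d : ℝ) + 1) * ((x ^ j * y ^ (k - j) * (k.choose j : ℝ)) * y) ≤
        (((d : ℝ) + 1) * (k.choose j : ℝ) * (j : ℝ) * Ψ ^ j
            / (((k : ℝ) + 1) * Ψ ^ (k + 1))) * x ^ (k + 1)
          + (((d : ℝ) + 1) * (k.choose j : ℝ) * (((k : ℝ) + 1) - (j : ℝ)) * Ψ ^ j
            / ((k : ℝ) + 1)) * y ^ (k + 1) := by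
    intro j hj
    have hjk : j ≤ k := Nat.lt_succ_iff.mp (Finset.mem_range.mp hj)
    obtain ⟨mm, rfl⟩ : ∃ mm, k = j + mm := ⟨k - j, by omega⟩
    simp only [Nat.add_sub_cancel_left]
    have H := brw_core (j + mm + 1) j (by omega) x (Ψ * y) hx (by positivity)
    rw [show j + mm + 1 - j = mm + 1 by omega] at H
    push_cast at H ⊢
    have hc0 : (0 : ℝ) ≤ ((d : ℝ) + 1) * ((j + mm).choose j : ℝ)
        / (((j : ℝ) + mm + 1) * Ψ ^ (mm + 1)) := by positivity
    have H2 := mul_le_mul_of_nonneg_left H hc0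
    have h1 : ((j : ℝ) + mm + 1) ≠ 0 := by positivity
    refine le_trans (le_of_eq ?_) (H2.trans (le_of_eq ?_))
    · field_simp
      ring
    · field_simp
      ring
  -- sum of the coefficients
  have sumA : ∑ j ∈ range (k + 1),
      ((((d : ℝ) + 1) * (k.choose j : ℝ) * (j : ℝ) * Ψ ^ j
        / (((k : ℝ) + 1) * Ψ ^ (k + 1))) * x ^ (k + 1)
        + (((d : ℝ) + 1) * (k.choose j : ℝ) * (((k : ℝ) + 1) - (j : ℝ)) * Ψ ^ j
        / ((k : ℝ) + 1)) * y ^ (k + 1))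
      = ((k : ℝ) * Ψ * (Ψ + 1) ^ (k - 1))
          * ((((d : ℝ) + 1) / (((k : ℝ) + 1) * Ψ ^ (k + 1))) * x ^ (k + 1))
        + ((((k : ℝ) + 1) * (Ψ + 1) ^ k - (k : ℝ) * Ψ * (Ψ + 1) ^ (k - 1)))
          * ((((d : ℝ) + 1) / ((k : ℝ) + 1)) * y ^ (k + 1)) := by
    rw [← brw_bin1 Ψ k, ← brw_bin2 Ψ k, Finset.mul_sum, ← Finset.sum_sub_distrib,
      Finset.sum_mul, Finset.sum_mul, ← Finset.sum_add_distrib]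
    exact Finset.sum_congr rfl fun j _ => by ring
  have expand : ((d : ℝ) + 1) * (y * (x + y) ^ k)
      = ∑ j ∈ range (k + 1),
          ((d : ℝ) + 1) * ((x ^ j * y ^ (k - j) * (k.choose j : ℝ)) * y) := by
    rw [add_pow, Finset.mul_sum, Finset.mul_sum]
    exact Finset.sum_congr rfl fun j _ => by ring
  obtain ⟨s, rfl⟩ : ∃ s, d = k + s := ⟨d - k, by omega⟩
  have hA : ((k : ℝ) * Ψ * (Ψ + 1) ^ (k - 1))
        * (((((k + s : ℕ) : ℝ)) + 1) / (((k : ℝ) + 1) * Ψ ^ (k + 1)) * x ^ (k + 1))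
      ≤ (((k + s : ℕ) : ℝ) * (Ψ + 1) ^ (k + s - 1) / Ψ ^ (k + s)) * x ^ (k + 1) := by
    rcases k with _ | kk
    · simp only [Nat.cast_zero, zero_mul]
      positivity
    · rw [show kk + 1 + s - 1 = kk + s by omega, show kk + 1 - 1 = kk by omega]
      have hs : (0 : ℝ) ≤ s := Nat.cast_nonneg s
      have h3 : Ψ ^ s ≤ (Ψ + 1) ^ s := pow_le_pow_left₀ (by linarith) (by linarith) s
      have h4 : (((kk : ℝ) + 1)) * (((kk : ℝ) + s) + 2)
          ≤ (((kk : ℝ) + 1) + s) * ((kk : ℝ) + 2) := by linarith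
      have h5 := mul_le_mul h4 h3 (by positivity) (by positivity)
      have h6 := mul_le_mul_of_nonneg_right h5
        (show (0:ℝ) ≤ (Ψ + 1) ^ kk * Ψ ^ (kk + 2) * x ^ (kk + 1 + 1) by positivity)
      have hpos : (0 : ℝ) < ((((kk : ℝ) + 1) + 1) * Ψ ^ (kk + 1 + 1)) * Ψ ^ (kk + 1 + s) := by
        positivity
      rw [← mul_le_mul_iff_left₀ hpos]
      refine le_trans (le_of_eq ?_) (h6.trans (le_of_eq ?_))
      · field_simp
        push_cast
        ring
      · field_simp
        push_cast
        ring
  have hB : ((((k : ℝ) + 1) * (Ψ + 1) ^ k - (k : ℝ) * Ψ * (Ψ + 1) ^ (k - 1)))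
        * (((((k + s : ℕ) : ℝ)) + 1) / ((k : ℝ) + 1) * y ^ (k + 1))
      ≤ ((Ψ + 1) ^ (k + s - 1) * (Ψ + ((k + s : ℕ) : ℝ) + 1)) * y ^ (k + 1) := by
    have hs : (0 : ℝ) ≤ s := Nat.cast_nonneg s
    rcases k with _ | kk
    · have h1 : (1 : ℝ) ≤ (Ψ + 1) ^ (0 + s - 1) := one_le_pow₀ (by linarith)
      have h2 : ((s : ℝ)) + 1 ≤ (Ψ + 1) ^ (0 + s - 1) * (Ψ + (s : ℝ) + 1) := by
        calc ((s : ℝ)) + 1 = 1 * (((s : ℝ)) + 1) := by ring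
          _ ≤ (Ψ + 1) ^ (0 + s - 1) * (Ψ + (s : ℝ) + 1) :=
              mul_le_mul h1 (by linarith) (by positivity) (by positivity)
      have h3 := mul_le_mul_of_nonneg_right h2 (pow_nonneg hy (0 + 1))
      refine le_trans (le_of_eq ?_) (h3.trans (le_of_eq ?_))
      · push_cast
        ring
      · push_cast
        ring
    · rw [show kk + 1 + s - 1 = kk + s by omega, show kk + 1 - 1 = kk by omega]
      have ha : (0 : ℝ) ≤ kk := Nat.cast_nonneg kk
      have hber : 1 + (s : ℝ) * Ψ ≤ (1 + Ψ) ^ s := one_add_mul_le_pow (by linarith) s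
      have heq : (1 + Ψ) ^ s = (Ψ + 1) ^ s := by rw [add_comm]
      have h5 : (s : ℝ) + 1 ≤ (Ψ + 1) ^ s := by
        rw [← heq]
        have := mul_le_mul_of_nonneg_left hΨ1 hs
        linarith
      have h6 : (Ψ + (kk : ℝ) + 2) * (((kk : ℝ) + s) + 2)
          ≤ ((s : ℝ) + 1) * ((Ψ + ((kk : ℝ) + s) + 2) * ((kk : ℝ) + 2)) := by
        have hP : (0 : ℝ) ≤ Ψ - 1 := by linarith
        nlinarith [mul_nonneg hs hΨ0.le, mul_nonneg hs hs, mul_nonneg ha hs,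
          mul_nonneg (mul_nonneg ha hs) hΨ0.le, mul_nonneg (mul_nonneg ha hs) hs,
          mul_nonneg (mul_nonneg ha ha) hs]
      have h7 := mul_le_mul h5 h6 (by positivity) (by positivity)
      have h8 := mul_le_mul_of_nonneg_right h7
        (show (0:ℝ) ≤ (Ψ + 1) ^ kk * y ^ (kk + 1 + 1) by positivity)
      have hpos : (0 : ℝ) < (((kk : ℝ) + 1) + 1) * (((s : ℝ)) + 1) := by positivity
      rw [← mul_le_mul_iff_left₀ hpos]
      refine le_trans (le_of_eq ?_) (h8.trans (le_of_eq ?_))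
      · field_simp
        push_cast
        ring
      · field_simp
        push_cast
        ring
  calc ((((k + s : ℕ) : ℝ)) + 1) * (y * (x + y) ^ k)
      = ∑ j ∈ range (k + 1),
          ((((k + s : ℕ) : ℝ)) + 1) * ((x ^ j * y ^ (k - j) * (k.choose j : ℝ)) * y) := expand
    _ ≤ ∑ j ∈ range (k + 1),
        ((((((k + s : ℕ) : ℝ)) + 1) * (k.choose j : ℝ) * (j : ℝ) * Ψ ^ j
          / (((k : ℝ) + 1) * Ψ ^ (k + 1))) * x ^ (k + 1)
          + (((((k + s : ℕ) : ℝ)) + 1) * (k.choose j : ℝ) * (((k : ℝ) + 1) - (j : ℝ)) * Ψ ^ j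
          / ((k : ℝ) + 1)) * y ^ (k + 1)) := Finset.sum_le_sum hterm
    _ = ((k : ℝ) * Ψ * (Ψ + 1) ^ (k - 1))
          * (((((k + s : ℕ) : ℝ)) + 1) / (((k : ℝ) + 1) * Ψ ^ (k + 1)) * x ^ (k + 1))
        + ((((k : ℝ) + 1) * (Ψ + 1) ^ k - (k : ℝ) * Ψ * (Ψ + 1) ^ (k - 1)))
          * (((((k + s : ℕ) : ℝ)) + 1) / ((k : ℝ) + 1) * y ^ (k + 1)) := sumA
    _ ≤ (((k + s : ℕ) : ℝ) * (Ψ + 1) ^ (k + s - 1) / Ψ ^ (k + s)) * x ^ (k + 1)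
        + ((Ψ + 1) ^ (k + s - 1) * (Ψ + ((k + s : ℕ) : ℝ) + 1)) * y ^ (k + 1) :=
      add_le_add hA hB


-- marginal increment bound
lemma brw_marginal (d : ℕ) (p : Polynomial ℝ) (hdeg : p.natDegree ≤ d)
    (hc : ∀ k, 0 ≤ p.coeff k) (u v : ℝ) (hu : 0 ≤ u) (hv : 0 ≤ v) :
    (u + v) * p.eval (u + v) ≤ u * p.eval u + ((d : ℝ) + 1) * (v * p.eval (u + v)) := by
  have hlt : p.natDegree < d + 1 := Nat.lt_succ_of_le hdeg
  rw [Polynomial.eval_eq_sum_range' hlt, Polynomial.eval_eq_sum_range' hlt]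
  rw [Finset.mul_sum, Finset.mul_sum, Finset.mul_sum, Finset.mul_sum, ← Finset.sum_add_distrib]
  apply Finset.sum_le_sum
  intro k hk
  have hk' : k ≤ d := Nat.lt_succ_iff.mp (Finset.mem_range.mp hk)
  have hps := brw_pow_sub k u v hu hv
  have hkd : ((k : ℝ) + 1) * (v * (u + v) ^ k) ≤ ((d : ℝ) + 1) * (v * (u + v) ^ k) := by
    apply mul_le_mul_of_nonneg_right _ (by positivity)
    have : (k : ℝ) ≤ (d : ℝ) := by exact_mod_cast hk'
    linarith
  have key : (u + v) ^ (k + 1) ≤ u ^ (k + 1) + ((d : ℝ) + 1) * (v * (u + v) ^ k) := by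
    nlinarith [hps, hkd]
  calc (u + v) * (p.coeff k * (u + v) ^ k) = p.coeff k * (u + v) ^ (k + 1) := by ring
    _ ≤ p.coeff k * (u ^ (k + 1) + ((d : ℝ) + 1) * (v * (u + v) ^ k)) :=
        mul_le_mul_of_nonneg_left key (hc k)
    _ = u * (p.coeff k * u ^ k) + ((d : ℝ) + 1) * (v * (p.coeff k * (u + v) ^ k)) := by ring

-- telescoping bound for a single resource
lemma brw_tele (d : ℕ) (p : Polynomial ℝ) (hdeg : p.natDegree ≤ d)
    (hc : ∀ k, 0 ≤ p.coeff k) (n : ℕ) (w : Fin n → ℝ) (hw : ∀ i, 0 < w i)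
    (T : Finset (Fin n)) :
    (∑ j ∈ T, w j) * p.eval (∑ j ∈ T, w j)
      ≤ ((d : ℝ) + 1) * ∑ i ∈ T, w i * p.eval ((∑ j ∈ T.filter (fun j => j < i), w j) + w i) := by
  induction T using Finset.induction_on_max with
  | empty => simp
  | insert a T hmax ih =>
    have haT : a ∉ T := fun h => lt_irrefl a (hmax a h)
    have hWnn : (0 : ℝ) ≤ ∑ j ∈ T, w j := Finset.sum_nonneg fun j _ => (hw j).le
    -- the filter over the inserted set
    have hfa : (insert a T).filter (fun j => j < a) = T := by
      rw [Finset.filter_insert, if_neg (lt_irrefl a)]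
      apply Finset.filter_true_of_mem
      exact hmax
    have hfi : ∀ i ∈ T, (insert a T).filter (fun j => j < i) = T.filter (fun j => j < i) := by
      intro i hi
      rw [Finset.filter_insert, if_neg (by exact fun h => absurd (hmax i hi) (asymm h))]
    rw [Finset.sum_insert haT, Finset.sum_insert haT, hfa]
    have heq : ∑ i ∈ T, w i * Polynomial.eval
          ((∑ j ∈ (insert a T).filter (fun j => j < i), w j) + w i) p
        = ∑ i ∈ T, w i * Polynomial.eval ((∑ j ∈ T.filter (fun j => j < i), w j) + w i) p :=
      Finset.sum_congr rfl fun i hi => by rw [hfi i hi]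
    rw [heq]
    have hmarg := brw_marginal d p hdeg hc (∑ j ∈ T, w j) (w a) hWnn (hw a).le
    have hih := ih
    rw [mul_add]
    calc (w a + ∑ j ∈ T, w j) * p.eval (w a + ∑ j ∈ T, w j)
        = ((∑ j ∈ T, w j) + w a) * p.eval ((∑ j ∈ T, w j) + w a) := by
          rw [add_comm (w a) (∑ j ∈ T, w j)]
      _ ≤ (∑ j ∈ T, w j) * p.eval (∑ j ∈ T, w j)
          + ((d : ℝ) + 1) * (w a * p.eval ((∑ j ∈ T, w j) + w a)) := hmarg
      _ ≤ ((d : ℝ) + 1) * ∑ i ∈ T, w i * p.eval ((∑ j ∈ T.filter (fun j => j < i), w j) + w i)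
          + ((d : ℝ) + 1) * (w a * p.eval ((∑ j ∈ T, w j) + w a)) := by
          linarith [hih]
      _ = ((d : ℝ) + 1) * (w a * p.eval ((∑ j ∈ T, w j) + w a))
          + ((d : ℝ) + 1) * ∑ i ∈ T, w i * p.eval ((∑ j ∈ T.filter (fun j => j < i), w j) + w i) := by
          ring

-- generic sum swap
lemma brw_swap {R : Type} [Fintype R] [DecidableEq R] {n : ℕ} (T : Fin n → Finset R)
    (f : Fin n → R → ℝ) :
    ∑ i : Fin n, ∑ r ∈ T i, f i r
      = ∑ r : R, ∑ i ∈ Finset.univ.filter (fun i => r ∈ T i), f i r := by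
  have h1 : ∀ i : Fin n, ∑ r ∈ T i, f i r = ∑ r : R, if r ∈ T i then f i r else 0 := by
    intro i
    rw [Finset.sum_ite_mem, Finset.univ_inter]
  have h2 : ∀ r : R, ∑ i ∈ Finset.univ.filter (fun i => r ∈ T i), f i r
      = ∑ i : Fin n, if r ∈ T i then f i r else 0 := by
    intro r
    rw [Finset.sum_filter]
  simp only [h1, h2]
  exact Finset.sum_comm


set_option maxHeartbeats 1000000 in
theorem best_reply_weighted_competitive
    (d : ℕ) (hd : 1 ≤ d) (Ψ : ℝ) (hΨpos : 0 < Ψ)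
    (hΨ : ((d : ℝ) + 1) * (Ψ + 1) ^ d = Ψ ^ (d + 1))
    (R : Type) [Fintype R] [DecidableEq R]
    (c : R → Polynomial ℝ)
    (hdeg : ∀ r, (c r).natDegree ≤ d)
    (hcoeff : ∀ r k, 0 ≤ (c r).coeff k)
    (n : ℕ) (w : Fin n → ℝ) (hw : ∀ i, 0 < w i)
    (𝒮 : Fin n → Set (Finset R)) (h𝒮 : ∀ i, (𝒮 i).Nonempty)
    (S : Fin n → Finset R) (hS : ∀ i, S i ∈ 𝒮 i)
    -- the best reply property: each request minimizes its own marginal cost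
    (hbr : ∀ i : Fin n, ∀ S' ∈ 𝒮 i,
      ∑ r ∈ S i, w i * (c r).eval
          ((∑ j ∈ Finset.univ.filter (fun j : Fin n => j < i ∧ r ∈ S j), w j) + w i)
        ≤ ∑ r ∈ S', w i * (c r).eval
          ((∑ j ∈ Finset.univ.filter (fun j : Fin n => j < i ∧ r ∈ S j), w j) + w i))
    (Sstar : Fin n → Finset R) (hSstar : ∀ i, Sstar i ∈ 𝒮 i) :
    ∑ r : R, (∑ i ∈ Finset.univ.filter (fun i : Fin n => r ∈ S i), w i)
        * (c r).eval (∑ i ∈ Finset.univ.filter (fun i : Fin n => r ∈ S i), w i)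
      ≤ Ψ ^ (d + 1)
        * ∑ r : R, (∑ i ∈ Finset.univ.filter (fun i : Fin n => r ∈ Sstar i), w i)
            * (c r).eval (∑ i ∈ Finset.univ.filter (fun i : Fin n => r ∈ Sstar i), w i) := by
  have hΨ1 : 1 ≤ Ψ := by
    by_contra h
    push_neg at h
    have h2 : Ψ ^ (d + 1) < 1 := pow_lt_one₀ hΨpos.le h (by omega)
    have h3 : (1 : ℝ) ≤ (Ψ + 1) ^ d := one_le_pow₀ (by linarith)
    have h4 : (2 : ℝ) ≤ (d : ℝ) + 1 := by
      have : (1 : ℝ) ≤ (d : ℝ) := by exact_mod_cast hd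
      linarith
    nlinarith
  -- abbreviations (as plain notation)
  have hLnn : ∀ r : R, (0:ℝ) ≤ ∑ i ∈ Finset.univ.filter (fun i : Fin n => r ∈ S i), w i :=
    fun r => Finset.sum_nonneg fun i _ => (hw i).le
  have hOnn : ∀ r : R, (0:ℝ) ≤ ∑ i ∈ Finset.univ.filter (fun i : Fin n => r ∈ Sstar i), w i :=
    fun r => Finset.sum_nonneg fun i _ => (hw i).le
  -- Step 1: greedy cost ≤ (d+1) * total marginal cost
  have step1 : ∑ r : R, (∑ i ∈ Finset.univ.filter (fun i : Fin n => r ∈ S i), w i)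
        * (c r).eval (∑ i ∈ Finset.univ.filter (fun i : Fin n => r ∈ S i), w i)
      ≤ ((d : ℝ) + 1) * ∑ i : Fin n, ∑ r ∈ S i, w i * (c r).eval
          ((∑ j ∈ Finset.univ.filter (fun j : Fin n => j < i ∧ r ∈ S j), w j) + w i) := by
    have h1 : ∀ r : R, (∑ i ∈ Finset.univ.filter (fun i : Fin n => r ∈ S i), w i)
        * (c r).eval (∑ i ∈ Finset.univ.filter (fun i : Fin n => r ∈ S i), w i)
        ≤ ((d : ℝ) + 1) * ∑ i ∈ Finset.univ.filter (fun i : Fin n => r ∈ S i),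
            w i * (c r).eval
              ((∑ j ∈ Finset.univ.filter (fun j : Fin n => j < i ∧ r ∈ S j), w j) + w i) := by
      intro r
      have hff : ∀ i : Fin n,
          (Finset.univ.filter (fun i : Fin n => r ∈ S i)).filter (fun j => j < i)
            = Finset.univ.filter (fun j : Fin n => j < i ∧ r ∈ S j) := by
        intro i
        rw [Finset.filter_filter]
        ext j
        simp [and_comm]
      have := brw_tele d (c r) (hdeg r) (hcoeff r) n w hw
        (Finset.univ.filter (fun i : Fin n => r ∈ S i))
      calc (∑ i ∈ Finset.univ.filter (fun i : Fin n => r ∈ S i), w i)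
          * (c r).eval (∑ i ∈ Finset.univ.filter (fun i : Fin n => r ∈ S i), w i)
          ≤ ((d : ℝ) + 1) * ∑ i ∈ Finset.univ.filter (fun i : Fin n => r ∈ S i),
              w i * (c r).eval
                ((∑ j ∈ (Finset.univ.filter (fun i : Fin n => r ∈ S i)).filter (fun j => j < i), w j) + w i) := this
        _ = ((d : ℝ) + 1) * ∑ i ∈ Finset.univ.filter (fun i : Fin n => r ∈ S i),
              w i * (c r).eval
                ((∑ j ∈ Finset.univ.filter (fun j : Fin n => j < i ∧ r ∈ S j), w j) + w i) := by
            congr 1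
            exact Finset.sum_congr rfl fun i _ => by rw [hff i]
    calc ∑ r : R, (∑ i ∈ Finset.univ.filter (fun i : Fin n => r ∈ S i), w i)
          * (c r).eval (∑ i ∈ Finset.univ.filter (fun i : Fin n => r ∈ S i), w i)
        ≤ ∑ r : R, ((d : ℝ) + 1) * ∑ i ∈ Finset.univ.filter (fun i : Fin n => r ∈ S i),
            w i * (c r).eval
              ((∑ j ∈ Finset.univ.filter (fun j : Fin n => j < i ∧ r ∈ S j), w j) + w i) :=
          Finset.sum_le_sum fun r _ => h1 r
      _ = ((d : ℝ) + 1) * ∑ r : R, ∑ i ∈ Finset.univ.filter (fun i : Fin n => r ∈ S i),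
            w i * (c r).eval
              ((∑ j ∈ Finset.univ.filter (fun j : Fin n => j < i ∧ r ∈ S j), w j) + w i) := by
          rw [Finset.mul_sum]
      _ = ((d : ℝ) + 1) * ∑ i : Fin n, ∑ r ∈ S i, w i * (c r).eval
            ((∑ j ∈ Finset.univ.filter (fun j : Fin n => j < i ∧ r ∈ S j), w j) + w i) := by
          rw [brw_swap S (fun i r => w i * (c r).eval
            ((∑ j ∈ Finset.univ.filter (fun j : Fin n => j < i ∧ r ∈ S j), w j) + w i))]
  -- Step 2: best reply + monotonicity
  have step2 : ∀ i : Fin n, ∑ r ∈ S i, w i * (c r).eval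
        ((∑ j ∈ Finset.univ.filter (fun j : Fin n => j < i ∧ r ∈ S j), w j) + w i)
      ≤ ∑ r ∈ Sstar i, w i * (c r).eval
          ((∑ k ∈ Finset.univ.filter (fun k : Fin n => r ∈ S k), w k)
            + (∑ k ∈ Finset.univ.filter (fun k : Fin n => r ∈ Sstar k), w k)) := by
    intro i
    refine le_trans (hbr i (Sstar i) (hSstar i)) (Finset.sum_le_sum ?_)
    intro r hr
    apply mul_le_mul_of_nonneg_left _ (hw i).le
    have hsub : 0 ≤ ∑ j ∈ Finset.univ.filter (fun j : Fin n => j < i ∧ r ∈ S j), w j :=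
      Finset.sum_nonneg fun j _ => (hw j).le
    apply brw_eval_mono (c r) (hcoeff r) (by linarith [(hw i).le])
    have h1 : (∑ j ∈ Finset.univ.filter (fun j : Fin n => j < i ∧ r ∈ S j), w j)
        ≤ ∑ k ∈ Finset.univ.filter (fun k : Fin n => r ∈ S k), w k := by
      apply Finset.sum_le_sum_of_subset_of_nonneg
      · intro j hj
        simp only [Finset.mem_filter, Finset.mem_univ, true_and] at hj ⊢
        exact hj.2
      · exact fun j _ _ => (hw j).le
    have h2 : w i ≤ ∑ k ∈ Finset.univ.filter (fun k : Fin n => r ∈ Sstar k), w k := by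
      apply Finset.single_le_sum (fun j _ => (hw j).le)
      simp only [Finset.mem_filter, Finset.mem_univ, true_and]
      exact hr
    linarith
  -- Step 3: smoothness per resource
  have step3 : ∀ r : R,
      ((d : ℝ) + 1) * ((∑ i ∈ Finset.univ.filter (fun i : Fin n => r ∈ Sstar i), w i)
          * (c r).eval ((∑ i ∈ Finset.univ.filter (fun i : Fin n => r ∈ S i), w i)
            + (∑ i ∈ Finset.univ.filter (fun i : Fin n => r ∈ Sstar i), w i)))
      ≤ ((d : ℝ) * (Ψ + 1) ^ (d - 1) / Ψ ^ d)
          * ((∑ i ∈ Finset.univ.filter (fun i : Fin n => r ∈ S i), w i)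
            * (c r).eval (∑ i ∈ Finset.univ.filter (fun i : Fin n => r ∈ S i), w i))
        + ((Ψ + 1) ^ (d - 1) * (Ψ + (d : ℝ) + 1))
          * ((∑ i ∈ Finset.univ.filter (fun i : Fin n => r ∈ Sstar i), w i)
            * (c r).eval (∑ i ∈ Finset.univ.filter (fun i : Fin n => r ∈ Sstar i), w i)) := by
    intro r
    set A := ∑ i ∈ Finset.univ.filter (fun i : Fin n => r ∈ S i), w i with hAdef
    set B := ∑ i ∈ Finset.univ.filter (fun i : Fin n => r ∈ Sstar i), w i with hBdef
    have hAnn : 0 ≤ A := hLnn r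
    have hBnn : 0 ≤ B := hOnn r
    have hlt : (c r).natDegree < d + 1 := Nat.lt_succ_of_le (hdeg r)
    rw [Polynomial.eval_eq_sum_range' hlt, Polynomial.eval_eq_sum_range' hlt,
      Polynomial.eval_eq_sum_range' hlt]
    calc ((d : ℝ) + 1) * (B * ∑ k ∈ range (d + 1), (c r).coeff k * (A + B) ^ k)
        = ∑ k ∈ range (d + 1), (c r).coeff k * (((d : ℝ) + 1) * (B * (A + B) ^ k)) := by
          rw [Finset.mul_sum, Finset.mul_sum]
          exact Finset.sum_congr rfl fun k _ => by ring
      _ ≤ ∑ k ∈ range (d + 1), (c r).coeff k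
            * (((d : ℝ) * (Ψ + 1) ^ (d - 1) / Ψ ^ d) * A ^ (k + 1)
              + ((Ψ + 1) ^ (d - 1) * (Ψ + (d : ℝ) + 1)) * B ^ (k + 1)) := by
          apply Finset.sum_le_sum
          intro k hk
          exact mul_le_mul_of_nonneg_left
            (brw_smooth d Ψ hΨ1 k (Nat.lt_succ_iff.mp (Finset.mem_range.mp hk)) A B hAnn hBnn)
            (hcoeff r k)
      _ = ((d : ℝ) * (Ψ + 1) ^ (d - 1) / Ψ ^ d)
            * (A * ∑ k ∈ range (d + 1), (c r).coeff k * A ^ k)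
          + ((Ψ + 1) ^ (d - 1) * (Ψ + (d : ℝ) + 1))
            * (B * ∑ k ∈ range (d + 1), (c r).coeff k * B ^ k) := by
          rw [Finset.mul_sum, Finset.mul_sum, Finset.mul_sum, Finset.mul_sum,
            ← Finset.sum_add_distrib]
          exact Finset.sum_congr rfl fun k _ => by ring
  -- assemble the chain
  have hC : ∑ r : R, (∑ i ∈ Finset.univ.filter (fun i : Fin n => r ∈ S i), w i)
        * (c r).eval (∑ i ∈ Finset.univ.filter (fun i : Fin n => r ∈ S i), w i)
      ≤ ((d : ℝ) * (Ψ + 1) ^ (d - 1) / Ψ ^ d)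
          * ∑ r : R, (∑ i ∈ Finset.univ.filter (fun i : Fin n => r ∈ S i), w i)
            * (c r).eval (∑ i ∈ Finset.univ.filter (fun i : Fin n => r ∈ S i), w i)
        + ((Ψ + 1) ^ (d - 1) * (Ψ + (d : ℝ) + 1))
          * ∑ r : R, (∑ i ∈ Finset.univ.filter (fun i : Fin n => r ∈ Sstar i), w i)
            * (c r).eval (∑ i ∈ Finset.univ.filter (fun i : Fin n => r ∈ Sstar i), w i) := by
    calc ∑ r : R, (∑ i ∈ Finset.univ.filter (fun i : Fin n => r ∈ S i), w i)
          * (c r).eval (∑ i ∈ Finset.univ.filter (fun i : Fin n => r ∈ S i), w i)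
        ≤ ((d : ℝ) + 1) * ∑ i : Fin n, ∑ r ∈ S i, w i * (c r).eval
            ((∑ j ∈ Finset.univ.filter (fun j : Fin n => j < i ∧ r ∈ S j), w j) + w i) := step1
      _ ≤ ((d : ℝ) + 1) * ∑ i : Fin n, ∑ r ∈ Sstar i, w i * (c r).eval
            ((∑ k ∈ Finset.univ.filter (fun k : Fin n => r ∈ S k), w k)
              + (∑ k ∈ Finset.univ.filter (fun k : Fin n => r ∈ Sstar k), w k)) := by
          apply mul_le_mul_of_nonneg_left (Finset.sum_le_sum fun i _ => step2 i)
          positivity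
      _ = ((d : ℝ) + 1) * ∑ r : R, ∑ i ∈ Finset.univ.filter (fun i : Fin n => r ∈ Sstar i),
            w i * (c r).eval
              ((∑ k ∈ Finset.univ.filter (fun k : Fin n => r ∈ S k), w k)
                + (∑ k ∈ Finset.univ.filter (fun k : Fin n => r ∈ Sstar k), w k)) := by
          rw [brw_swap Sstar (fun i r => w i * (c r).eval
            ((∑ k ∈ Finset.univ.filter (fun k : Fin n => r ∈ S k), w k)
              + (∑ k ∈ Finset.univ.filter (fun k : Fin n => r ∈ Sstar k), w k)))]
      _ = ∑ r : R, ((d : ℝ) + 1) * ((∑ i ∈ Finset.univ.filter (fun i : Fin n => r ∈ Sstar i), w i)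
            * (c r).eval ((∑ i ∈ Finset.univ.filter (fun i : Fin n => r ∈ S i), w i)
              + (∑ i ∈ Finset.univ.filter (fun i : Fin n => r ∈ Sstar i), w i))) := by
          rw [Finset.mul_sum]
          exact Finset.sum_congr rfl fun r _ => by rw [← Finset.sum_mul]
      _ ≤ ∑ r : R, (((d : ℝ) * (Ψ + 1) ^ (d - 1) / Ψ ^ d)
            * ((∑ i ∈ Finset.univ.filter (fun i : Fin n => r ∈ S i), w i)
              * (c r).eval (∑ i ∈ Finset.univ.filter (fun i : Fin n => r ∈ S i), w i))
          + ((Ψ + 1) ^ (d - 1) * (Ψ + (d : ℝ) + 1))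
            * ((∑ i ∈ Finset.univ.filter (fun i : Fin n => r ∈ Sstar i), w i)
              * (c r).eval (∑ i ∈ Finset.univ.filter (fun i : Fin n => r ∈ Sstar i), w i))) :=
          Finset.sum_le_sum fun r _ => step3 r
      _ = _ := by
          rw [Finset.sum_add_distrib, ← Finset.mul_sum, ← Finset.mul_sum]
  -- final algebra
  have hΨne : Ψ ≠ 0 := hΨpos.ne'
  have hpow_d : (Ψ + 1) ^ d = (Ψ + 1) ^ (d - 1) * (Ψ + 1) := by
    conv_lhs => rw [show d = (d - 1) + 1 by omega]
    rw [pow_succ]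
  have hkey : (Ψ + 1) ^ (d - 1) * (Ψ + (d : ℝ) + 1)
      = (1 - (d : ℝ) * (Ψ + 1) ^ (d - 1) / Ψ ^ d) * Ψ ^ (d + 1) := by
    have h1 : (1 - (d : ℝ) * (Ψ + 1) ^ (d - 1) / Ψ ^ d) * Ψ ^ (d + 1)
        = Ψ ^ (d + 1) - (d : ℝ) * (Ψ + 1) ^ (d - 1) * Ψ := by
      field_simp
      ring
    rw [h1, ← hΨ, hpow_d]
    ring
  have hmupos : (0 : ℝ) < (Ψ + 1) ^ (d - 1) * (Ψ + (d : ℝ) + 1) := by positivity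
  have h1lam : (0 : ℝ) < 1 - (d : ℝ) * (Ψ + 1) ^ (d - 1) / Ψ ^ d := by
    have hP : (0 : ℝ) < Ψ ^ (d + 1) := by positivity
    have h2 : (0 : ℝ) < (1 - (d : ℝ) * (Ψ + 1) ^ (d - 1) / Ψ ^ d) * Ψ ^ (d + 1) := by
      rw [← hkey]; exact hmupos
    rcases mul_pos_iff.mp h2 with ⟨h, _⟩ | ⟨_, h⟩
    · exact h
    · linarith
  have h8 : (1 - (d : ℝ) * (Ψ + 1) ^ (d - 1) / Ψ ^ d)
        * (∑ r : R, (∑ i ∈ Finset.univ.filter (fun i : Fin n => r ∈ S i), w i)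
          * (c r).eval (∑ i ∈ Finset.univ.filter (fun i : Fin n => r ∈ S i), w i))
      ≤ ((Ψ + 1) ^ (d - 1) * (Ψ + (d : ℝ) + 1))
        * (∑ r : R, (∑ i ∈ Finset.univ.filter (fun i : Fin n => r ∈ Sstar i), w i)
          * (c r).eval (∑ i ∈ Finset.univ.filter (fun i : Fin n => r ∈ Sstar i), w i)) := by
    nlinarith [hC]
  rw [hkey, mul_assoc] at h8
  exact (mul_le_mul_iff_right₀ h1lam).mp h8
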